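/- There is an absolute constant C > 0 such that for all positive integers n, k, d, d₀ with d₀ ≤ d and all reals ε > 0, δ > 0, there exists a one-query ((3d₀+5)ε, δ′)-steward for k adaptively chosen (ε,δ)-concentrated functions f : {0,1}^n → ℝ^d with randomness complexity exactly n, where δ′ = 2^{C·k·d·log₂(d₀+1)/d₀}·δ. -/

import Mathlib

open Classical

/-- Probability of `P` under the uniform distribution on a finite type. -/
noncomputable def pr {α : Type*} [Fintype α] (P : α → Prop) : ℝ :=
  ((Finset.univ.filter P).card : ℝ) / (Fintype.card α : ℝ)

/-- `f : {0,1}^n → ℝ^d` is `(ε,δ)`-concentrated at `μ`. -/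
def Concentrated (n d : ℕ) (ε δ : ℝ)
    (f : (Fin n → Bool) → Fin d → ℝ) (μ : Fin d → ℝ) : Prop :=
  pr (fun X : Fin n → Bool => ∃ j, |f X j - μ j| > ε) ≤ δ

/-- A deterministic owner for `k` rounds of `(ε,δ)`-concentrated functions
`{0,1}^n → ℝ^d`: given the history of responses `Y_1,…,Y_{i-1}`, it produces
a function `f_i` together with a point `μ_i` at which `f_i` is concentrated. -/
structure Owner (n k d : ℕ) (ε δ : ℝ) where
  act : List (Fin d → ℝ) → (((Fin n → Bool) → Fin d → ℝ) × (Fin d → ℝ))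
  conc : ∀ ys : List (Fin d → ℝ), ys.length < k →
    Concentrated n d ε δ (act ys).1 (act ys).2

/-- A one-query steward with randomness complexity `m`: in each round it chooses
a query point from its randomness and the past query answers, and it chooses a
response from its randomness and the past and current query answers. -/
structure Steward (n k d m : ℕ) where
  q : (Fin m → Bool) → List (Fin d → ℝ) → (Fin n → Bool)
  r : (Fin m → Bool) → List (Fin d → ℝ) → (Fin d → ℝ) → (Fin d → ℝ)

/-- The interaction `O ↔ S(Z)` for `i` rounds: the list of triples `(Y_i, W_i, μ_i)`. -/
noncomputable def run {n k d m : ℕ} {ε δ : ℝ} (O : Owner n k d ε δ) (S : Steward n k d m)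
    (Z : Fin m → Bool) : ℕ → List ((Fin d → ℝ) × (Fin d → ℝ) × (Fin d → ℝ))
  | 0 => []
  | i + 1 =>
    let h := run O S Z i
    let fμ := O.act (h.map fun p => p.1)
    let X := S.q Z (h.map fun p => p.2.1)
    let W := fμ.1 X
    h ++ [(S.r Z (h.map fun p => p.2.1) W, W, fμ.2)]

/-- `S` is a one-query `(ε',δ')`-steward for `k` adaptively chosen
`(ε,δ)`-concentrated functions `{0,1}^n → ℝ^d`. -/
def IsSteward (n k d m : ℕ) (ε δ ε' δ' : ℝ) (S : Steward n k d m) : Prop :=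
  ∀ O : Owner n k d ε δ,
    pr (fun Z : Fin m → Bool =>
      ∃ p ∈ run O S Z k, ∃ j : Fin d, |p.1 j - p.2.2 j| > ε') ≤ δ'

namespace RS
noncomputable section

variable (d₀ : ℕ) (ε : ℝ)

/-- period length -/
def Lp : ℝ := 2*ε*((d₀:ℝ)+1)

/-- index of the length-2ε cell (mod d₀+1) containing x -/
def sIdx (x : ℝ) : ℤ := ⌊x / (2*ε)⌋ % ((d₀:ℤ)+1)

/-- floor of x to the grid Lℤ + 2εs -/
def gFloor (s : ℕ) (x : ℝ) : ℝ := 2*ε*s + Lp d₀ ε * ⌊(x - 2*ε*s)/Lp d₀ ε⌋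

variable {d₀ ε}

lemma Lp_pos (hε : 0 < ε) : 0 < Lp d₀ ε := by
  unfold Lp; positivity

lemma gFloor_le (hε : 0 < ε) (s : ℕ) (x : ℝ) : gFloor d₀ ε s x ≤ x := by
  have hL := Lp_pos (d₀ := d₀) hε
  have h1 : (⌊(x - 2*ε*s)/Lp d₀ ε⌋ : ℝ) ≤ (x - 2*ε*s)/Lp d₀ ε := Int.floor_le _
  have h2 : Lp d₀ ε * (⌊(x - 2*ε*s)/Lp d₀ ε⌋ : ℝ) ≤ x - 2*ε*s := by
    calc Lp d₀ ε * (⌊(x - 2*ε*s)/Lp d₀ ε⌋ : ℝ) ≤ Lp d₀ ε * ((x - 2*ε*s)/Lp d₀ ε) :=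
          mul_le_mul_of_nonneg_left h1 hL.le
      _ = x - 2*ε*s := by field_simp
  unfold gFloor; linarith

lemma lt_gFloor_add (hε : 0 < ε) (s : ℕ) (x : ℝ) : x < gFloor d₀ ε s x + Lp d₀ ε := by
  have hL := Lp_pos (d₀ := d₀) hε
  have h1 : (x - 2*ε*s)/Lp d₀ ε < (⌊(x - 2*ε*s)/Lp d₀ ε⌋ : ℝ) + 1 := Int.lt_floor_add_one _
  have h2 : x - 2*ε*s < Lp d₀ ε * ((⌊(x - 2*ε*s)/Lp d₀ ε⌋ : ℝ) + 1) := by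
    calc x - 2*ε*s = Lp d₀ ε * ((x - 2*ε*s)/Lp d₀ ε) := by field_simp
      _ < Lp d₀ ε * ((⌊(x - 2*ε*s)/Lp d₀ ε⌋ : ℝ) + 1) := by
          exact mul_lt_mul_of_pos_left h1 hL
  unfold gFloor; nlinarith
lemma gFloor_mono (hε : 0 < ε) (s : ℕ) {x y : ℝ} (h : x ≤ y) :
    gFloor d₀ ε s x ≤ gFloor d₀ ε s y := by
  have hL := Lp_pos (d₀ := d₀) hε
  unfold gFloor
  have : (⌊(x - 2*ε*s)/Lp d₀ ε⌋ : ℝ) ≤ (⌊(y - 2*ε*s)/Lp d₀ ε⌋ : ℝ) := by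
    exact_mod_cast Int.floor_le_floor (by gcongr)
  nlinarith

/-- if x lies in [g, g+2ε) for a grid point g = 2εs + L q then sIdx x = s -/
lemma sIdx_eq (hε : 0 < ε) {s : ℕ} (hs : s ≤ d₀) {q : ℤ} {x : ℝ}
    (h1 : 2*ε*s + Lp d₀ ε * q ≤ x) (h2 : x < 2*ε*s + Lp d₀ ε * q + 2*ε) :
    sIdx d₀ ε x = s := by
  have hL := Lp_pos (d₀ := d₀) hε
  have hfl : ⌊x / (2*ε)⌋ = (s : ℤ) + ((d₀:ℤ)+1) * q := by
    rw [Int.floor_eq_iff]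
    constructor
    · push_cast
      rw [le_div_iff₀ (by linarith : (0:ℝ) < 2*ε)]
      unfold Lp at h1; push_cast at h1 ⊢; nlinarith
    · push_cast
      rw [div_lt_iff₀ (by linarith : (0:ℝ) < 2*ε)]
      unfold Lp at h2; push_cast at h2 ⊢; nlinarith
  unfold sIdx
  rw [hfl, Int.add_mul_emod_self_left]
  exact Int.emod_eq_of_lt (by positivity) (by omega)

/-- gFloor values are grid points: difference structure -/
lemma gFloor_det (hε : 0 < ε) {s : ℕ} (hs : s ≤ d₀) {x x' μ : ℝ}
    (hx : |x - μ| ≤ ε) (hx' : |x' - μ| ≤ ε)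
    (h1 : sIdx d₀ ε x ≠ s) (h2 : sIdx d₀ ε x' ≠ s) :
    gFloor d₀ ε s x = gFloor d₀ ε s x' := by
  have hL := Lp_pos (d₀ := d₀) hε
  rw [abs_le] at hx hx'
  -- key: if y ≤ y' ≤ y + 2ε and sIdx y' ≠ s then gFloor s y' ≤ gFloor s y
  have key : ∀ y y' : ℝ, y ≤ y' → y' ≤ y + 2*ε → sIdx d₀ ε y' ≠ s →
      gFloor d₀ ε s y' ≤ gFloor d₀ ε s y := by
    intro y y' hle hclose hns
    by_contra hlt
    push_neg at hlt
    set q := ⌊(y - 2*ε*s)/Lp d₀ ε⌋ with hq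
    set q' := ⌊(y' - 2*ε*s)/Lp d₀ ε⌋ with hq'
    have hqq : q < q' := by
      by_contra hge
      push_neg at hge
      have : (q':ℝ) ≤ (q:ℝ) := by exact_mod_cast hge
      unfold gFloor at hlt
      nlinarith
    have hstep : gFloor d₀ ε s y + Lp d₀ ε ≤ gFloor d₀ ε s y' := by
      unfold gFloor
      have : (q:ℝ) + 1 ≤ (q':ℝ) := by exact_mod_cast hqq
      nlinarith
    have hy : y < gFloor d₀ ε s y + Lp d₀ ε := lt_gFloor_add hε s y
    have hg' : gFloor d₀ ε s y' ≤ y' := gFloor_le hε s y'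
    -- so  gFloor s y' ≤ y' ≤ y + 2ε < gFloor s y + L + 2ε ≤ gFloor s y' + 2ε
    have hin1 : 2*ε*s + Lp d₀ ε * q' ≤ y' := by
      unfold gFloor at hg'; exact hg'
    have hin2 : y' < 2*ε*s + Lp d₀ ε * q' + 2*ε := by
      have : gFloor d₀ ε s y' = 2*ε*s + Lp d₀ ε * q' := rfl
      linarith [hstep, hy, hclose, this ▸ hstep]
    exact hns (sIdx_eq hε hs hin1 hin2)
  rcases le_total x x' with h | h
  · have h1' := gFloor_mono (d₀ := d₀) hε s h
    have h2' := key x x' h (by linarith) h2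
    linarith
  · have h1' := gFloor_mono (d₀ := d₀) hε s h
    have h2' := key x' x h (by linarith) h1
    linarith


lemma sIdx_nonneg (x : ℝ) : 0 ≤ sIdx d₀ ε x := Int.emod_nonneg _ (by positivity)
lemma sIdx_le (x : ℝ) : sIdx d₀ ε x ≤ d₀ := by
  have := Int.emod_lt_of_pos (⌊x / (2*ε)⌋) (b := (d₀:ℤ)+1) (by positivity)
  unfold sIdx; omega

variable (d₀ ε) in
/-- shift s is valid for block b of w if no coordinate of the block has cell-index s -/
def valid (d : ℕ) (w : Fin d → ℝ) (b s : ℕ) : Prop :=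
  ∀ j : Fin d, (j:ℕ)/d₀ = b → sIdx d₀ ε (w j) ≠ s

lemma exists_shift (hd₀ : 0 < d₀) {d : ℕ} (w : Fin d → ℝ) (b : ℕ) :
    ∃ s, s ≤ d₀ ∧ valid d₀ ε d w b s := by
  classical
  set T : Finset ℕ :=
    (Finset.univ.filter (fun j : Fin d => (j:ℕ)/d₀ = b)).image
      (fun j => (sIdx d₀ ε (w j)).toNat) with hT
  have hcard : T.card ≤ d₀ := by
    calc T.card ≤ (Finset.univ.filter (fun j : Fin d => (j:ℕ)/d₀ = b)).card :=
          Finset.card_image_le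
      _ ≤ (Finset.range d₀).card := by
          refine Finset.card_le_card_of_injOn (fun j => (j:ℕ) - b*d₀) ?_ ?_
          · intro j hj
            simp only [Finset.coe_filter, Set.mem_setOf_eq, Finset.mem_coe, Finset.mem_filter, Finset.mem_univ, true_and] at hj
            have e1 : b * d₀ + (j:ℕ) % d₀ = (j:ℕ) := by
              rw [← hj, Nat.mul_comm]; exact Nat.div_add_mod _ _
            have e2 := Nat.mod_lt (j:ℕ) hd₀
            simp only [Finset.coe_range, Set.mem_Iio, Finset.mem_coe, Finset.mem_range]
            omega
          · intro a ha a' ha' hee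
            simp only [Finset.coe_filter, Set.mem_setOf_eq, Finset.mem_univ, true_and] at ha ha'
            have e1 : b * d₀ + (a:ℕ) % d₀ = (a:ℕ) := by
              rw [← ha, Nat.mul_comm]; exact Nat.div_add_mod _ _
            have e2 := Nat.mod_lt (a:ℕ) hd₀
            have e1' : b * d₀ + (a':ℕ) % d₀ = (a':ℕ) := by
              rw [← ha', Nat.mul_comm]; exact Nat.div_add_mod _ _
            have e2' := Nat.mod_lt (a':ℕ) hd₀
            simp only at hee
            exact Fin.ext (by omega)
      _ = d₀ := Finset.card_range d₀
  have hns : ¬ (Finset.range (d₀+1) ⊆ T) := by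
    intro hsub
    have := Finset.card_le_card hsub
    rw [Finset.card_range] at this
    omega
  rw [Finset.not_subset] at hns
  obtain ⟨s, hsmem, hsnot⟩ := hns
  rw [Finset.mem_range] at hsmem
  refine ⟨s, by omega, ?_⟩
  intro j hj hcon
  apply hsnot
  rw [hT, Finset.mem_image]
  refine ⟨j, by simp [hj], ?_⟩
  rw [hcon]; simp

variable (d₀ ε) in
def shiftB (d : ℕ) (w : Fin d → ℝ) (b : ℕ) : ℕ :=
  if h : ∃ s, s ≤ d₀ ∧ valid d₀ ε d w b s then Nat.find h else 0

lemma shiftB_le {d : ℕ} (w : Fin d → ℝ) (b : ℕ) : shiftB d₀ ε d w b ≤ d₀ := by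
  unfold shiftB
  split
  · next h => exact (Nat.find_spec h).1
  · exact Nat.zero_le _

lemma shiftB_valid (hd₀ : 0 < d₀) {d : ℕ} (w : Fin d → ℝ) (b : ℕ) :
    valid d₀ ε d w b (shiftB d₀ ε d w b) := by
  unfold shiftB
  rw [dif_pos (exists_shift hd₀ w b)]
  exact (Nat.find_spec (exists_shift (ε := ε) hd₀ w b)).2

variable (d₀) in
def nb (d : ℕ) : ℕ := (d-1)/d₀ + 1

lemma block_lt_nb (hd : 0 < d) (j : Fin d) : (j:ℕ)/d₀ < nb d₀ d := by
  have : (j:ℕ)/d₀ ≤ (d-1)/d₀ := Nat.div_le_div_right (by omega)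
  unfold nb; omega

variable (d₀ ε) in
def sv (d : ℕ) (w : Fin d → ℝ) : Fin (nb d₀ d) → Fin (d₀+1) :=
  fun b => ⟨shiftB d₀ ε d w b, Nat.lt_succ_of_le (shiftB_le w b)⟩

variable (d₀ ε) in
def Rnd (d : ℕ) (w : Fin d → ℝ) : Fin d → ℝ :=
  fun j => gFloor d₀ ε (shiftB d₀ ε d w ((j:ℕ)/d₀)) (w j)

lemma Rnd_close (hε : 0 < ε) {d : ℕ} {w μ : Fin d → ℝ}
    (hw : ∀ j, |w j - μ j| ≤ ε) (j : Fin d) :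
    |Rnd d₀ ε d w j - μ j| ≤ (2*(d₀:ℝ)+3)*ε := by
  have h1 := gFloor_le (d₀ := d₀) hε (shiftB d₀ ε d w ((j:ℕ)/d₀)) (w j)
  have h2 := lt_gFloor_add (d₀ := d₀) hε (shiftB d₀ ε d w ((j:ℕ)/d₀)) (w j)
  have h3 := hw j
  rw [abs_le] at h3 ⊢
  unfold Rnd
  have hL : Lp d₀ ε = 2*ε*((d₀:ℝ)+1) := rfl
  constructor <;> nlinarith [h1, h2, h3.1, h3.2]

lemma Rnd_det (hε : 0 < ε) (hd₀ : 0 < d₀) {d : ℕ} (hd : 0 < d) {w w' μ : Fin d → ℝ}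
    (hw : ∀ j, |w j - μ j| ≤ ε) (hw' : ∀ j, |w' j - μ j| ≤ ε)
    (hsv : sv d₀ ε d w = sv d₀ ε d w') : Rnd d₀ ε d w = Rnd d₀ ε d w' := by
  funext j
  have hb := block_lt_nb (d₀ := d₀) hd j
  have hsb : shiftB d₀ ε d w ((j:ℕ)/d₀) = shiftB d₀ ε d w' ((j:ℕ)/d₀) := by
    have := congrFun hsv ⟨(j:ℕ)/d₀, hb⟩
    simpa [sv, Fin.ext_iff] using this
  unfold Rnd
  rw [hsb]
  exact gFloor_det hε (shiftB_le w' _)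
    (hw j) (hw' j)
    (by rw [← hsb]; exact shiftB_valid hd₀ w _ j rfl)
    (shiftB_valid hd₀ w' _ j rfl)

variable (d₀ ε) in
def canon (d : ℕ) (μ : Fin d → ℝ) (σ : Fin (nb d₀ d) → Fin (d₀+1)) : Fin d → ℝ :=
  if h : ∃ w, (∀ j, |w j - μ j| ≤ ε) ∧ sv d₀ ε d w = σ then Rnd d₀ ε d h.choose else 0

lemma Rnd_eq_canon (hε : 0 < ε) (hd₀ : 0 < d₀) {d : ℕ} (hd : 0 < d) {w μ : Fin d → ℝ}
    (hw : ∀ j, |w j - μ j| ≤ ε) :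
    Rnd d₀ ε d w = canon d₀ ε d μ (sv d₀ ε d w) := by
  unfold canon
  rw [dif_pos ⟨w, hw, rfl⟩]
  have hch := (⟨w, hw, rfl⟩ : ∃ w', (∀ j, |w' j - μ j| ≤ ε) ∧ sv d₀ ε d w' = sv d₀ ε d w).choose_spec
  exact Rnd_det hε hd₀ hd hw hch.1 hch.2.symm


variable (d₀ ε)

lemma pr_nonneg {α : Type*} [Fintype α] (P : α → Prop) : 0 ≤ pr P := by
  unfold pr; positivity

lemma pr_mono {α : Type*} [Fintype α] {P Q : α → Prop} (h : ∀ x, P x → Q x) :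
    pr P ≤ pr Q := by
  unfold pr
  apply div_le_div_of_nonneg_right _ (by positivity)
  have hsub : Finset.univ.filter P ⊆ Finset.univ.filter Q := by
    intro x hx
    simp only [Finset.mem_filter, Finset.mem_univ, true_and] at hx ⊢
    exact h x hx
  exact_mod_cast Finset.card_le_card hsub

lemma pr_union {α : Type*} [Fintype α] {ι : Type*} (s : Finset ι) (P : ι → α → Prop) :
    pr (fun x => ∃ i ∈ s, P i x) ≤ ∑ i ∈ s, pr (P i) := by
  unfold pr
  rw [← Finset.sum_div]
  apply div_le_div_of_nonneg_right _ (by positivity)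
  have hsub : (@Finset.filter α (fun x => ∃ i ∈ s, P i x)
        (fun a => propDecidable _) Finset.univ) ⊆
      s.biUnion (fun i => @Finset.filter α (P i) (fun a => propDecidable _) Finset.univ) := by
    intro x hx
    simp only [Finset.mem_filter, Finset.mem_univ, true_and] at hx
    obtain ⟨i, hi, hP⟩ := hx
    simp only [Finset.mem_biUnion, Finset.mem_filter, Finset.mem_univ, true_and]
    exact ⟨i, hi, hP⟩
  have h2 := le_trans (Finset.card_le_card hsub) (Finset.card_biUnion_le)
  exact_mod_cast h2

-- the steward
variable (d n k : ℕ) in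
def stw : Steward n k d n := ⟨fun Z _ => Z, fun _ _ W => Rnd d₀ ε d W⟩

variable {n k d : ℕ} {δ : ℝ}
def YH (O : Owner n k d ε δ) (Z : Fin n → Bool) (i : ℕ) : List (Fin d → ℝ) :=
  (run O (stw d₀ ε d n k) Z i).map (fun p => p.1)

lemma YH_succ (O : Owner n k d ε δ) (Z : Fin n → Bool) (i : ℕ) :
    YH d₀ ε O Z (i+1) = YH d₀ ε O Z i ++ [Rnd d₀ ε d ((O.act (YH d₀ ε O Z i)).1 Z)] := by
  simp [YH, run, stw]

lemma run_succ (O : Owner n k d ε δ) (Z : Fin n → Bool) (i : ℕ) :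
    run O (stw d₀ ε d n k) Z (i+1) = run O (stw d₀ ε d n k) Z i ++
      [(Rnd d₀ ε d ((O.act (YH d₀ ε O Z i)).1 Z), (O.act (YH d₀ ε O Z i)).1 Z,
        (O.act (YH d₀ ε O Z i)).2)] := by
  simp [YH, run, stw]

def Hs (O : Owner n k d ε δ) : ℕ → Finset (List (Fin d → ℝ))
  | 0 => {[]}
  | i + 1 => (Hs O i).biUnion
      (fun h => Finset.univ.image (fun σ : Fin (nb d₀ d) → Fin (d₀+1) =>
        h ++ [canon d₀ ε d (O.act h).2 σ]))

lemma Hs_len (O : Owner n k d ε δ) (i : ℕ) : ∀ h ∈ Hs d₀ ε O i, h.length = i := by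
  induction i with
  | zero => intro h hh; simp [Hs] at hh; simp [hh]
  | succ i ih =>
    intro h hh
    simp only [Hs, Finset.mem_biUnion, Finset.mem_image, Finset.mem_univ, true_and] at hh
    obtain ⟨h', hh', σ, rfl⟩ := hh
    simp [ih h' hh']

lemma Hs_card (O : Owner n k d ε δ) (i : ℕ) :
    (Hs d₀ ε O i).card ≤ ((d₀+1)^(nb d₀ d))^i := by
  induction i with
  | zero => simp [Hs]
  | succ i ih =>
    calc (Hs d₀ ε O (i+1)).card
        ≤ ∑ h ∈ Hs d₀ ε O i, (Finset.univ.image (fun σ : Fin (nb d₀ d) → Fin (d₀+1) =>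
            h ++ [canon d₀ ε d (O.act h).2 σ])).card := Finset.card_biUnion_le
      _ ≤ ∑ _h ∈ Hs d₀ ε O i, (d₀+1)^(nb d₀ d) := by
          apply Finset.sum_le_sum
          intro h _
          calc _ ≤ (Finset.univ : Finset (Fin (nb d₀ d) → Fin (d₀+1))).card :=
                Finset.card_image_le
            _ = (d₀+1)^(nb d₀ d) := by simp [Fintype.card_fun]
      _ = (Hs d₀ ε O i).card * (d₀+1)^(nb d₀ d) := by
          rw [Finset.sum_const, smul_eq_mul]
      _ ≤ ((d₀+1)^(nb d₀ d))^i * (d₀+1)^(nb d₀ d) := by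
          exact Nat.mul_le_mul_right _ ih
      _ = ((d₀+1)^(nb d₀ d))^(i+1) := by ring

lemma mem_Hs (hε : 0 < ε) (hd₀ : 0 < d₀) (hd : 0 < d) (O : Owner n k d ε δ)
    (Z : Fin n → Bool) (i : ℕ)
    (H : ∀ i' < i, ∀ j, |(O.act (YH d₀ ε O Z i')).1 Z j - (O.act (YH d₀ ε O Z i')).2 j| ≤ ε) :
    YH d₀ ε O Z i ∈ Hs d₀ ε O i := by
  induction i with
  | zero => simp [YH, run, Hs]
  | succ i ih =>
    rw [YH_succ]
    simp only [Hs, Finset.mem_biUnion, Finset.mem_image, Finset.mem_univ, true_and]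
    refine ⟨YH d₀ ε O Z i, ih (fun i' hi' => H i' (by omega)), sv d₀ ε d ((O.act (YH d₀ ε O Z i)).1 Z), ?_⟩
    rw [← Rnd_eq_canon hε hd₀ hd (fun j => H i (by omega) j)]

lemma good_run (hε : 0 < ε) (O : Owner n k d ε δ) (Z : Fin n → Bool) (i : ℕ)
    (H : ∀ i' < i, ∀ j, |(O.act (YH d₀ ε O Z i')).1 Z j - (O.act (YH d₀ ε O Z i')).2 j| ≤ ε) :
    ∀ p ∈ run O (stw d₀ ε d n k) Z i, ∀ j, |p.1 j - p.2.2 j| ≤ (2*(d₀:ℝ)+3)*ε := by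
  induction i with
  | zero => intro p hp; simp [run] at hp
  | succ i ih =>
    intro p hp
    rw [run_succ, List.mem_append] at hp
    rcases hp with hp | hp
    · exact ih (fun i' hi' => H i' (by omega)) p hp
    · simp only [List.mem_singleton] at hp
      subst hp
      intro j
      exact Rnd_close hε (fun j => H i (by omega) j) j

def Dev (O : Owner n k d ε δ) (i : ℕ) (Z : Fin n → Bool) : Prop :=
  ∃ j, |(O.act (YH d₀ ε O Z i)).1 Z j - (O.act (YH d₀ ε O Z i)).2 j| > ε

lemma steward_bound (hε : 0 < ε) (hd₀ : 0 < d₀) (hd : 0 < d) (hδ : 0 ≤ δ)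
    (O : Owner n k d ε δ) :
    pr (fun Z : Fin n → Bool =>
      ∃ p ∈ run O (stw d₀ ε d n k) Z k, ∃ j : Fin d, |p.1 j - p.2.2 j| > (3*(d₀:ℝ)+5)*ε)
      ≤ ((k * ((d₀+1)^(nb d₀ d))^k : ℕ) : ℝ) * δ := by
  have step1 : ∀ Z : Fin n → Bool,
      (∃ p ∈ run O (stw d₀ ε d n k) Z k, ∃ j : Fin d, |p.1 j - p.2.2 j| > (3*(d₀:ℝ)+5)*ε) →
      ∃ i ∈ Finset.range k, Dev d₀ ε O i Z ∧ ∀ i' < i, ¬ Dev d₀ ε O i' Z := by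
    intro Z hF
    have hex : ∃ i, i < k ∧ Dev d₀ ε O i Z := by
      by_contra hno
      push_neg at hno
      have H : ∀ i' < k, ∀ j,
          |(O.act (YH d₀ ε O Z i')).1 Z j - (O.act (YH d₀ ε O Z i')).2 j| ≤ ε := by
        intro i' hi' j
        have h1 := hno i' hi'
        unfold Dev at h1
        push_neg at h1
        exact h1 j
      obtain ⟨p, hp, j, hj⟩ := hF
      have h2 := good_run d₀ ε hε O Z k H p hp j
      nlinarith [h2, hj, hε]
    refine ⟨Nat.find hex, Finset.mem_range.2 (Nat.find_spec hex).1, (Nat.find_spec hex).2, ?_⟩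
    intro i' hi' hDi'
    exact (Nat.find_min hex hi') ⟨lt_trans hi' (Nat.find_spec hex).1, hDi'⟩
  have chain2 : ∀ i ∈ Finset.range k,
      pr (fun Z : Fin n → Bool => Dev d₀ ε O i Z ∧ ∀ i' < i, ¬ Dev d₀ ε O i' Z)
        ≤ ((Hs d₀ ε O i).card : ℝ) * δ := by
    intro i hi
    rw [Finset.mem_range] at hi
    have st : ∀ Z : Fin n → Bool, (Dev d₀ ε O i Z ∧ ∀ i' < i, ¬ Dev d₀ ε O i' Z) →
        ∃ h ∈ Hs d₀ ε O i, YH d₀ ε O Z i = h ∧ Dev d₀ ε O i Z := by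
      rintro Z ⟨hDi, hgood⟩
      refine ⟨YH d₀ ε O Z i, mem_Hs d₀ ε hε hd₀ hd O Z i ?_, rfl, hDi⟩
      intro i' hi' j
      have h1 := hgood i' hi'
      unfold Dev at h1
      push_neg at h1
      exact h1 j
    refine le_trans (le_trans (pr_mono st) (pr_union _ _)) ?_
    have hterm : ∀ h ∈ Hs d₀ ε O i,
        pr (fun Z : Fin n → Bool => YH d₀ ε O Z i = h ∧ Dev d₀ ε O i Z) ≤ δ := by
      intro h hh
      have hlen : h.length = i := Hs_len d₀ ε O i h hh
      have hconc := O.conc h (by omega)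
      refine le_trans (pr_mono ?_) hconc
      rintro Z ⟨hY, hD⟩
      unfold Dev at hD
      rw [hY] at hD
      exact hD
    calc ∑ h ∈ Hs d₀ ε O i, pr (fun Z : Fin n → Bool => YH d₀ ε O Z i = h ∧ Dev d₀ ε O i Z)
        ≤ ∑ _h ∈ Hs d₀ ε O i, δ := Finset.sum_le_sum hterm
      _ = ((Hs d₀ ε O i).card : ℝ) * δ := by rw [Finset.sum_const, nsmul_eq_mul]
  have hcount : ∑ i ∈ Finset.range k, ((Hs d₀ ε O i).card : ℝ) * δ
      ≤ ((k * ((d₀+1)^(nb d₀ d))^k : ℕ) : ℝ) * δ := by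
    have hnat : ∑ i ∈ Finset.range k, (Hs d₀ ε O i).card ≤ k * ((d₀+1)^(nb d₀ d))^k := by
      have hB1 : 1 ≤ (d₀+1)^(nb d₀ d) := Nat.one_le_pow _ _ (by omega)
      calc ∑ i ∈ Finset.range k, (Hs d₀ ε O i).card
          ≤ ∑ _i ∈ Finset.range k, ((d₀+1)^(nb d₀ d))^k := by
            apply Finset.sum_le_sum
            intro i hi
            exact le_trans (Hs_card d₀ ε O i)
              (Nat.pow_le_pow_right hB1 (le_of_lt (Finset.mem_range.1 hi)))
        _ = k * ((d₀+1)^(nb d₀ d))^k := by rw [Finset.sum_const, Finset.card_range, smul_eq_mul]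
    calc ∑ i ∈ Finset.range k, ((Hs d₀ ε O i).card : ℝ) * δ
        = ((∑ i ∈ Finset.range k, (Hs d₀ ε O i).card : ℕ) : ℝ) * δ := by
          rw [← Finset.sum_mul]; push_cast; ring
      _ ≤ ((k * ((d₀+1)^(nb d₀ d))^k : ℕ) : ℝ) * δ := by
          apply mul_le_mul_of_nonneg_right _ hδ
          exact_mod_cast hnat
  calc pr (fun Z : Fin n → Bool =>
        ∃ p ∈ run O (stw d₀ ε d n k) Z k, ∃ j : Fin d, |p.1 j - p.2.2 j| > (3*(d₀:ℝ)+5)*ε)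
      ≤ pr (fun Z : Fin n → Bool =>
          ∃ i ∈ Finset.range k, Dev d₀ ε O i Z ∧ ∀ i' < i, ¬ Dev d₀ ε O i' Z) := pr_mono step1
    _ ≤ ∑ i ∈ Finset.range k,
          pr (fun Z : Fin n → Bool => Dev d₀ ε O i Z ∧ ∀ i' < i, ¬ Dev d₀ ε O i' Z) :=
        pr_union _ _
    _ ≤ ∑ i ∈ Finset.range k, ((Hs d₀ ε O i).card : ℝ) * δ := Finset.sum_le_sum chain2
    _ ≤ _ := hcount

lemma numeric (hk : 0 < k) (hd : 0 < d) (hd₀ : 0 < d₀) (hdd : d₀ ≤ d) :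
    ((k * ((d₀+1)^(nb d₀ d))^k : ℕ) : ℝ) ≤
      (2 : ℝ) ^ ((8:ℝ) * k * d * Real.logb 2 ((d₀ : ℝ) + 1) / d₀) := by
  set a : ℝ := (d₀ : ℝ) + 1 with ha
  have ha2 : (2:ℝ) ≤ a := by
    have : (1:ℝ) ≤ (d₀:ℝ) := by exact_mod_cast hd₀
    linarith
  have hapos : (0:ℝ) < a := by linarith
  set lg : ℝ := Real.logb 2 a with hlg
  have hlg1 : 1 ≤ lg := by
    rw [hlg, Real.le_logb_iff_rpow_le one_lt_two hapos, Real.rpow_one]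
    exact ha2
  have hm : ((nb d₀ d : ℝ)) * d₀ ≤ 2 * d := by
    have hnat : nb d₀ d * d₀ ≤ 2 * d := by
      have h1 : (d-1)/d₀ * d₀ ≤ d - 1 := Nat.div_mul_le_self _ _
      have : nb d₀ d * d₀ = (d-1)/d₀ * d₀ + d₀ := by unfold nb; ring
      omega
    exact_mod_cast hnat
  -- rewrite LHS
  have hcast : ((k * ((d₀+1)^(nb d₀ d))^k : ℕ) : ℝ) = (k:ℝ) * a ^ (nb d₀ d * k) := by
    push_cast [pow_mul]
    ring
  rw [hcast]
  have hk2 : (k:ℝ) ≤ (2:ℝ) ^ (k:ℝ) := by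
    have h1 : k < 2^k := Nat.lt_two_pow_self
    have h2 : ((2:ℝ))^(k:ℝ) = ((2^k : ℕ):ℝ) := by
      rw [Real.rpow_natCast]; push_cast; ring
    rw [h2]
    exact_mod_cast h1.le
  have hpow : a ^ (nb d₀ d * k) = (2:ℝ) ^ (lg * (nb d₀ d * k : ℕ)) := by
    have h1 : (2:ℝ) ^ lg = a := Real.rpow_logb (by norm_num) (by norm_num) hapos
    calc a ^ (nb d₀ d * k) = ((2:ℝ) ^ lg) ^ (nb d₀ d * k) := by rw [h1]
      _ = (2:ℝ) ^ (lg * (nb d₀ d * k : ℕ)) := by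
          rw [← Real.rpow_natCast ((2:ℝ) ^ lg) (nb d₀ d * k), ← Real.rpow_mul (by norm_num)]
  calc (k:ℝ) * a ^ (nb d₀ d * k)
      ≤ (2:ℝ) ^ (k:ℝ) * (2:ℝ) ^ (lg * (nb d₀ d * k : ℕ)) := by
        rw [hpow]
        apply mul_le_mul_of_nonneg_right hk2 (by positivity)
    _ = (2:ℝ) ^ ((k:ℝ) + lg * (nb d₀ d * k : ℕ)) := (Real.rpow_add (by norm_num) _ _).symm
    _ ≤ (2 : ℝ) ^ ((8:ℝ) * k * d * lg / d₀) := by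
        apply Real.rpow_le_rpow_of_exponent_le one_le_two
        have hd₀r : (0:ℝ) < (d₀:ℝ) := by exact_mod_cast hd₀
        rw [le_div_iff₀ hd₀r]
        have hkr : (1:ℝ) ≤ (k:ℝ) := by exact_mod_cast hk
        have hddr : (d₀:ℝ) ≤ (d:ℝ) := by exact_mod_cast hdd
        have hdr : (1:ℝ) ≤ (d:ℝ) := by exact_mod_cast hd
        have e1 : ((nb d₀ d * k : ℕ) : ℝ) = (nb d₀ d : ℝ) * (k:ℝ) := by push_cast; ring
        rw [e1]
        have h2 : lg * ((nb d₀ d:ℝ) * k) * d₀ ≤ lg * k * (2*d) := by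
          have := mul_le_mul_of_nonneg_left hm (by positivity : (0:ℝ) ≤ lg * k)
          nlinarith
        have h3a : (k:ℝ)*d₀ ≤ (k:ℝ)*d := mul_le_mul_of_nonneg_left hddr (by positivity)
        have h3b : (k:ℝ)*d*1 ≤ (k:ℝ)*d*lg := mul_le_mul_of_nonneg_left hlg1 (by positivity)
        have h3 : (k:ℝ) * d₀ ≤ k * d * lg := by nlinarith [h3a, h3b]
        have h4 : (0:ℝ) ≤ (k:ℝ)*d*lg := by positivity
        nlinarith [h2, h3, h4]

end
end RS

/-- randomness-`n` steward: there is an absolute constant `C > 0` such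
that for all positive `n, k, d, d₀` with `d₀ ≤ d` and all `ε > 0`, `δ > 0`, there is a
one-query `((3d₀+5)ε, δ′)`-steward for `k` adaptively chosen `(ε,δ)`-concentrated
functions `{0,1}^n → ℝ^d` with randomness complexity exactly `n`, where
`δ′ = 2^{C·k·d·log₂(d₀+1)/d₀}·δ`. -/
theorem reuse_steward :
    ∃ C : ℝ, 0 < C ∧
      ∀ n k d d₀ : ℕ, 0 < n → 0 < k → 0 < d → 0 < d₀ → d₀ ≤ d →
        ∀ ε δ : ℝ, 0 < ε → 0 < δ →
          ∃ S : Steward n k d n,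
            IsSteward n k d n ε δ ((3 * (d₀ : ℝ) + 5) * ε)
              ((2 : ℝ) ^ (C * k * d * Real.logb 2 ((d₀ : ℝ) + 1) / d₀) * δ) S := by
  refine ⟨8, by norm_num, ?_⟩
  intro n k d d₀ hn hk hd hd₀ hdd ε δ hε hδ
  refine ⟨RS.stw d₀ ε d n k, ?_⟩
  intro O
  calc pr (fun Z : Fin n → Bool =>
        ∃ p ∈ run O (RS.stw d₀ ε d n k) Z k, ∃ j : Fin d,
          |p.1 j - p.2.2 j| > (3 * (d₀ : ℝ) + 5) * ε)
      ≤ ((k * ((d₀+1)^(RS.nb d₀ d))^k : ℕ) : ℝ) * δ :=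
        RS.steward_bound d₀ ε hε hd₀ hd hδ.le O
    _ ≤ (2 : ℝ) ^ ((8:ℝ) * k * d * Real.logb 2 ((d₀ : ℝ) + 1) / d₀) * δ :=
        mul_le_mul_of_nonneg_right (RS.numeric d₀ hk hd hd₀ hdd) hδ.le
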